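/- arXiv:2405.20074 — 3 statements merged into one kernel-verified Lean document; each statement's English description precedes it below -/
import Mathlib

section
/- For every γ > 0 and every x ∈ ℝ, the smoothed maximum satisfies the two-sided relation (1/7)·m_γ'(x)·x ≤ m_γ(x) ≤ m_γ'(x)·x, i.e. the inequality m_γ'(x)·x/c₁ ≤ m_γ(x) ≤ c₂·m_γ'(x)·x holds with c₁ = 7 and c₂ = 1. -/
/-- The smoothed maximum `m_γ`, a `C²` regularization of `x ↦ max 0 x`. -/
noncomputable def smoothedMax (γ x : ℝ) : ℝ :=
  if 0 < x ∧ x < 1 / (2 * γ) then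
    48 * γ ^ 4 * x ^ 5 - 64 * γ ^ 3 * x ^ 4 + 24 * γ ^ 2 * x ^ 3
  else max 0 x

/-- The derivative of the smoothed maximum. -/
noncomputable def smoothedMaxDeriv (γ x : ℝ) : ℝ :=
  if 0 < x ∧ x < 1 / (2 * γ) then
    240 * γ ^ 4 * x ^ 4 - 256 * γ ^ 3 * x ^ 3 + 72 * γ ^ 2 * x ^ 2
  else if x ≤ 0 then 0 else 1

theorem smoothedMax_deriv_relation (γ : ℝ) (hγ : 0 < γ) (x : ℝ) :
    smoothedMaxDeriv γ x * x / 7 ≤ smoothedMax γ x ∧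
      smoothedMax γ x ≤ 1 * (smoothedMaxDeriv γ x * x) := by
  unfold smoothedMax smoothedMaxDeriv
  by_cases h : 0 < x ∧ x < 1 / (2 * γ)
  · rw [if_pos h, if_pos h]
    constructor
    · nlinarith [mul_nonneg (mul_nonneg (sq_nonneg γ) (pow_pos h.1 3).le) (sq_nonneg (γ * x - 1))]
    · nlinarith [mul_nonneg (mul_nonneg (sq_nonneg γ) (pow_pos h.1 3).le) (sq_nonneg (2 * γ * x - 1))]
  · rw [if_neg h, if_neg h]
    by_cases hx : x ≤ 0
    · simp only [hx, if_true]
      rw [max_eq_left hx]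
      norm_num
    · simp only [hx, if_false]
      push_neg at hx
      rw [max_eq_right hx.le]
      constructor <;> nlinarith
end

section
/- For every γ > 0 and every x ∈ ℝ, one has max(0, x) ≤ m_γ(x) + 1/(2γ). -/
theorem max_le_smoothedMax_add (γ : ℝ) (hγ : 0 < γ) (x : ℝ) :
    max 0 x ≤ smoothedMax γ x + 1 / (2 * γ) := by
  have hpos : 0 < 1 / (2 * γ) := by positivity
  unfold smoothedMax
  split_ifs with h
  · obtain ⟨hx0, hx1⟩ := h
    have hmax : max 0 x = x := max_eq_right hx0.le
    rw [hmax]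
    have hp : 0 ≤ 48 * γ ^ 4 * x ^ 5 - 64 * γ ^ 3 * x ^ 4 + 24 * γ ^ 2 * x ^ 3 := by
      nlinarith [mul_nonneg (mul_nonneg (pow_pos hx0 3).le (sq_nonneg γ)) (sq_nonneg (6 * γ * x - 4)), mul_nonneg (pow_pos hx0 3).le (sq_nonneg γ)]
    linarith
  · linarith
end

section
/- For every γ > 0 and every x ∈ ℝ, one has m_γ(x)² ≤ x·m_γ(x); in particular x·m_γ(x) ≥ 0. -/
theorem smoothedMax_sq_le (γ : ℝ) (hγ : 0 < γ) (x : ℝ) :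
    smoothedMax γ x ^ 2 ≤ x * smoothedMax γ x ∧ 0 ≤ x * smoothedMax γ x := by
  unfold smoothedMax
  split_ifs with h
  · obtain ⟨hx, hx2⟩ := h
    have h2 : 2 * γ * x < 1 := by
      rw [lt_div_iff₀ (by positivity)] at hx2
      nlinarith
    set m := 48 * γ ^ 4 * x ^ 5 - 64 * γ ^ 3 * x ^ 4 + 24 * γ ^ 2 * x ^ 3 with hm
    have hm0 : 0 ≤ m := by nlinarith [mul_nonneg (pow_pos hx 3).le (sq_nonneg (12*γ^2*x - 8*γ)), mul_nonneg (pow_pos hx 3).le (sq_nonneg γ)]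
    have hmx : m ≤ x := by
      nlinarith [mul_nonneg (mul_nonneg (pow_nonneg (by nlinarith : (0:ℝ) ≤ 1 - 2*γ*x) 3) (by nlinarith : (0:ℝ) ≤ 1 + 6*γ*x)) hx.le]
    constructor
    · nlinarith
    · exact mul_nonneg hx.le hm0
  · rcases le_or_gt x 0 with hx | hx
    · rw [max_eq_left hx]
      simp
    · rw [max_eq_right hx.le]
      exact ⟨by nlinarith, by positivity⟩
end
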